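/- Let K ⊂ ℂ be a compact R-circular set, i.e., for every z ∈ ∂K there is a closed disk of radius R containing K with z on its boundary circle. Then for every polynomial p of degree n ≥ 1 with all roots in K, sup_{K} |p'| ≥ (n / (2R)) · sup_{K} |p|. -/

import Mathlib

open Polynomial Metric

/-- A compact set `K ⊆ ℂ` is `R`-circular if every boundary point lies on the
boundary circle of some closed disk of radius `R` containing `K`. -/
def RCircular (R : ℝ) (K : Set ℂ) : Prop :=
  ∀ z ∈ frontier K, ∃ c : ℂ, dist z c = R ∧ K ⊆ closedBall c R

-- per-term half-plane lemma
lemma half_lemma (a u : ℂ) (hu : u ≠ 0) (h : ‖u - a‖ ≤ ‖a‖) :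
    (1:ℝ)/2 ≤ (a / u).re := by
  have h2 : Complex.normSq (u - a) ≤ Complex.normSq a := by
    have := mul_self_le_mul_self (norm_nonneg _) h
    simpa [Complex.sq_norm, ← Complex.normSq_eq_norm_sq, mul_self_eq_mul_self_iff] using
      (by nlinarith [Complex.sq_norm (u - a), Complex.sq_norm a] : Complex.normSq (u-a) ≤ Complex.normSq a)
  have hn : 0 < Complex.normSq u := Complex.normSq_pos.2 hu
  rw [Complex.div_re, ← add_div, le_div_iff₀ hn]
  simp only [Complex.normSq_apply, Complex.sub_re, Complex.sub_im] at h2 ⊢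
  nlinarith [h2]

-- log-derivative identity
lemma logderiv_lemma (z : ℂ) : ∀ (s : Multiset ℂ), (∀ w ∈ s, z ≠ w) →
    Polynomial.eval z (Polynomial.derivative ((s.map (fun w => X - C w)).prod))
      = ((s.map (fun w => X - C w)).prod.eval z) * (s.map (fun w => (z - w)⁻¹)).sum := by
  refine Multiset.induction ?_ ?_
  · simp
  · intro w s ih hz
    have hw : z ≠ w := hz w (Multiset.mem_cons_self _ _)
    have hws : z - w ≠ 0 := sub_ne_zero.2 hw
    have ih' := ih (fun x hx => hz x (Multiset.mem_cons_of_mem hx))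
    simp only [Multiset.map_cons, Multiset.prod_cons, Multiset.sum_cons, derivative_mul,
      derivative_sub, derivative_X, derivative_C, sub_zero, eval_add, eval_mul, eval_one,
      one_mul, eval_sub, eval_X, eval_C, ih']
    field_simp

/-- Erőd; Levenberg–Poletsky: Turán's inequality for `R`-circular compact sets. -/
theorem turan_circular (R : ℝ) (hR : 0 < R) (K : Set ℂ) (hK : IsCompact K)
    (hcirc : RCircular R K)
    (n : ℕ) (hn : 1 ≤ n) (p : Polynomial ℂ) (hdeg : p.natDegree = n)
    (hroots : ∀ w : ℂ, p.IsRoot w → w ∈ K) :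
    ((n : ℝ) / (2 * R)) * sSup ((fun z => ‖p.eval z‖) '' K)
      ≤ sSup ((fun z => ‖(Polynomial.derivative p).eval z‖) '' K) := by
  have hp0 : p ≠ 0 := fun h => by simp [h] at hdeg; omega
  have hdegpos : 0 < p.degree := natDegree_pos_iff_degree_pos.1 (by omega)
  obtain ⟨w0, hw0⟩ := Complex.exists_root hdegpos
  have hKne : K.Nonempty := ⟨w0, hroots w0 hw0⟩
  have hcont : Continuous fun z : ℂ => ‖p.eval z‖ :=
    continuous_norm.comp (p.continuous_aeval)
  have hcont' : Continuous fun z : ℂ => ‖(derivative p).eval z‖ :=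
    continuous_norm.comp ((derivative p).continuous_aeval)
  obtain ⟨z₀, hz₀K, hmax⟩ := hK.exists_isMaxOn hKne hcont.continuousOn
  have hbdd' : BddAbove ((fun z => ‖(derivative p).eval z‖) '' K) :=
    (hK.image hcont').bddAbove
  have hSup : sSup ((fun z => ‖p.eval z‖) '' K) = ‖p.eval z₀‖ := by
    refine IsGreatest.csSup_eq ⟨⟨z₀, hz₀K, rfl⟩, ?_⟩
    rintro _ ⟨z, hz, rfl⟩
    exact hmax hz
  rw [hSup]
  -- trivial case: p(z₀) = 0
  by_cases hpz : p.eval z₀ = 0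
  · rw [hpz]
    simp only [norm_zero, mul_zero]
    exact le_csSup_of_le hbdd' ⟨z₀, hz₀K, rfl⟩ (norm_nonneg _)
  -- z₀ ∈ frontier K
  have hz₀fr : z₀ ∈ frontier K := by
    by_contra hfr
    have hint : z₀ ∈ interior K := by
      have : z₀ ∈ closure K := subset_closure hz₀K
      rw [closure_eq_interior_union_frontier] at this
      rcases this with h | h
      · exact h
      · exact absurd h hfr
    have hloc : IsLocalMax (norm ∘ fun z => p.eval z) z₀ := by
      filter_upwards [mem_interior_iff_mem_nhds.1 hint] with x hx
      simpa using hmax hx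
    have := Complex.eventually_eq_of_isLocalMax_norm
      (Filter.Eventually.of_forall fun z => p.differentiableAt) hloc
    have hinf : {x | (p - C (p.eval z₀)).IsRoot x}.Infinite := by
      apply Set.Infinite.mono (s := {y | p.eval y = p.eval z₀})
      · intro y hy
        simp only [Polynomial.IsRoot, eval_sub, eval_C, sub_eq_zero]
        exact hy
      · exact infinite_of_mem_nhds z₀ this
    have h0 : p - C (p.eval z₀) = 0 := Polynomial.eq_zero_of_infinite_isRoot _ hinf
    have : p = C (p.eval z₀) := by linear_combination h0
    rw [this] at hdeg
    simp [Polynomial.natDegree_C] at hdeg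
    omega
  obtain ⟨c, hdist, hball⟩ := hcirc z₀ hz₀fr
  -- factorization
  have hsplit : p.Splits := IsAlgClosed.splits p
  have hcard : (p.roots).card = n := by
    have := hsplit.natDegree_eq_card_roots
    simpa [hdeg] using this.symm
  have hfac := hsplit.eq_prod_roots
  set q : Polynomial ℂ := ((p.roots).map fun a => X - C a).prod with hq
  have hrne : ∀ w ∈ p.roots, z₀ ≠ w := by
    intro w hw h
    exact hpz (h ▸ (Polynomial.isRoot_of_mem_roots hw))
  have hld := logderiv_lemma z₀ p.roots hrne
  set S : ℂ := ((p.roots).map fun w => (z₀ - w)⁻¹).sum with hS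
  -- |p'(z₀)| = |p(z₀)| * |S|
  have hderiv : (derivative p).eval z₀ = p.eval z₀ * S := by
    have h1 : derivative p = C p.leadingCoeff * derivative q := by
      conv_lhs => rw [hfac]
      rw [derivative_mul, derivative_C, zero_mul, zero_add]
    have h2 : p.eval z₀ = p.leadingCoeff * q.eval z₀ := by
      conv_lhs => rw [hfac]
      simp
    rw [h1, eval_mul, eval_C, hld, h2]
    ring
  -- key estimate: n/2 ≤ Re ((z₀ - c) * S)
  have hre : (n : ℝ) / 2 ≤ ((z₀ - c) * S).re := by
    have hmap : (z₀ - c) * S = ((p.roots).map fun w => (z₀ - c) / (z₀ - w)).sum := by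
      rw [hS, ← Multiset.sum_map_mul_left]
      congr 1
    rw [hmap]
    have hresum : (((p.roots).map fun w => (z₀ - c) / (z₀ - w)).sum).re
        = (((p.roots).map fun w => ((z₀ - c) / (z₀ - w)).re)).sum := by
      have := map_multiset_sum Complex.reAddGroupHom ((p.roots).map fun w => (z₀ - c) / (z₀ - w))
      simpa [Multiset.map_map, Function.comp, Complex.reAddGroupHom] using this
    rw [hresum]
    have hterm : ∀ x ∈ (p.roots).map fun w => ((z₀ - c) / (z₀ - w)).re, (1:ℝ)/2 ≤ x := by
      intro x hx
      obtain ⟨w, hw, rfl⟩ := Multiset.mem_map.1 hx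
      apply half_lemma
      · exact sub_ne_zero.2 (hrne w hw)
      · have hwK : w ∈ K := hroots w (Polynomial.isRoot_of_mem_roots hw)
        have h1 : ‖w - c‖ ≤ R := by
          have := hball hwK
          simpa [Complex.dist_eq, mem_closedBall] using this
        have h2 : ‖z₀ - c‖ = R := by
          simpa [Complex.dist_eq] using hdist
        calc ‖(z₀ - w) - (z₀ - c)‖ = ‖c - w‖ := by ring_nf
          _ ≤ R := by rw [norm_sub_rev]; exact h1
          _ = ‖z₀ - c‖ := h2.symm
    have := Multiset.card_nsmul_le_sum hterm
    rw [Multiset.card_map, hcard] at this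
    calc (n:ℝ)/2 = n • ((1:ℝ)/2) := by rw [nsmul_eq_mul]; ring
      _ ≤ _ := this
  -- conclude |S| ≥ n/(2R)
  have habsS : (n : ℝ) / (2 * R) ≤ ‖S‖ := by
    have h1 : ((z₀ - c) * S).re ≤ ‖(z₀ - c) * S‖ := Complex.re_le_norm _
    have h2 : ‖(z₀ - c) * S‖ = R * ‖S‖ := by
      rw [norm_mul]
      congr 1
      simpa [Complex.dist_eq] using hdist
    rw [div_le_iff₀ (by positivity)]
    nlinarith [hre]
  have hfinal : (n : ℝ) / (2 * R) * ‖p.eval z₀‖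
      ≤ ‖(derivative p).eval z₀‖ := by
    rw [hderiv, norm_mul, mul_comm]
    exact mul_le_mul_of_nonneg_left habsS (norm_nonneg _)
  exact hfinal.trans (le_csSup hbdd' ⟨z₀, hz₀K, rfl⟩)
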